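/- Fix a Newton diagram datum: an integer n ≥ 1 and lattice points (P₀,Q₀),…,(Pₙ,Qₙ) ∈ ℤ² with P₀ = 0, Qₙ = 0, P₀ < P₁ < … < Pₙ, Q₀ > Q₁ > … > Qₙ, pᵢ = Pᵢ − Pᵢ₋₁, qᵢ = Qᵢ₋₁ − Qᵢ, q₁/p₁ > … > qₙ/pₙ, and gcd(pᵢ,qᵢ) = 1 for each i. Let Γ₋ be the closure of (ℝ≥0)² \ (conv{(P₀,Q₀),…,(Pₙ,Qₙ)} + (ℝ≥0)²). Then the number of lattice points in the topological interior of Γ₋ equals Σ_{i=1}^{n} (pᵢ−1)(qᵢ−1)/2 + Σ_{i=1}^{n−1} pᵢQᵢ − (n−1). -/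

import Mathlib

open Set MeasureTheory Pointwise

/-- The region `Γ₋`: the closure of `(ℝ≥0)² \ (conv{(P₀,Q₀),…,(Pₙ,Qₙ)} + (ℝ≥0)²)`,
where `+` denotes the Minkowski sum. -/
def gammaMinus (n : ℕ) (P Q : ℕ → ℤ) : Set (ℝ × ℝ) :=
  closure ((Set.Ici (0 : ℝ) ×ˢ Set.Ici (0 : ℝ)) \
    (convexHull ℝ {x : ℝ × ℝ | ∃ i ≤ n, x = ((P i : ℝ), (Q i : ℝ))} +
      Set.Ici (0 : ℝ) ×ˢ Set.Ici (0 : ℝ)))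


namespace ND

variable {n : ℕ} {P Q : ℕ → ℤ}

/-- bundled hypotheses -/
structure Datum (n : ℕ) (P Q : ℕ → ℤ) : Prop where
  hn : 1 ≤ n
  hP0 : P 0 = 0
  hQn : Q n = 0
  hPmono : ∀ i < n, P i < P (i + 1)
  hQmono : ∀ i < n, Q (i + 1) < Q i
  hconv : ∀ i, 1 ≤ i → i < n →
      ((Q (i - 1) - Q i : ℤ) : ℚ) / ((P i - P (i - 1) : ℤ) : ℚ) >
        ((Q i - Q (i + 1) : ℤ) : ℚ) / ((P (i + 1) - P i : ℤ) : ℚ)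
  hgcd : ∀ i, 1 ≤ i → i ≤ n → Int.gcd (P i - P (i - 1)) (Q (i - 1) - Q i) = 1

def pp (P : ℕ → ℤ) (i : ℕ) : ℤ := P i - P (i - 1)
def qq (Q : ℕ → ℤ) (i : ℕ) : ℤ := Q (i - 1) - Q i
def cc (P Q : ℕ → ℤ) (i : ℕ) : ℤ := qq Q i * P i + pp P i * Q i

theorem ppos (h : Datum n P Q) {i : ℕ} (h1 : 1 ≤ i) (h2 : i ≤ n) : 0 < pp P i := by
  have := h.hPmono (i - 1) (by omega)
  have hi : i - 1 + 1 = i := by omega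
  rw [hi] at this
  simp [pp]; omega

theorem qpos (h : Datum n P Q) {i : ℕ} (h1 : 1 ≤ i) (h2 : i ≤ n) : 0 < qq Q i := by
  have := h.hQmono (i - 1) (by omega)
  have hi : i - 1 + 1 = i := by omega
  rw [hi] at this
  simp [qq]; omega

theorem Pmono' (h : Datum n P Q) {i j : ℕ} (hij : i ≤ j) (hj : j ≤ n) : P i ≤ P j := by
  induction j with
  | zero => have : i = 0 := by omega
            subst this; exact le_refl _
  | succ k ih =>
    rcases Nat.eq_or_lt_of_le hij with rfl | hlt
    · exact le_refl _
    · exact le_trans (ih (by omega) (by omega)) (le_of_lt (h.hPmono k (by omega)))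

theorem Qmono' (h : Datum n P Q) {i j : ℕ} (hij : i ≤ j) (hj : j ≤ n) : Q j ≤ Q i := by
  induction j with
  | zero => have : i = 0 := by omega
            subst this; exact le_refl _
  | succ k ih =>
    rcases Nat.eq_or_lt_of_le hij with rfl | hlt
    · exact le_refl _
    · exact le_trans (le_of_lt (h.hQmono k (by omega))) (ih (by omega) (by omega))

theorem Pnonneg (h : Datum n P Q) {i : ℕ} (hi : i ≤ n) : 0 ≤ P i := by
  have := Pmono' h (Nat.zero_le i) hi; rw [h.hP0] at this; exact this

theorem Qnonneg (h : Datum n P Q) {i : ℕ} (hi : i ≤ n) : 0 ≤ Q i := by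
  have := Qmono' h hi (le_refl n); rw [h.hQn] at this; exact this

end ND

namespace ND

variable {n : ℕ} {P Q : ℕ → ℤ}

theorem cross_adj (h : Datum n P Q) {i : ℕ} (h1 : 1 ≤ i) (h2 : i < n) :
    qq Q (i + 1) * pp P i < qq Q i * pp P (i + 1) := by
  have hc := h.hconv i h1 h2
  have hp1 : (0:ℤ) < P i - P (i - 1) := ppos h h1 (le_of_lt h2)
  have hp2 : (0:ℤ) < P (i + 1) - P i := by
    have := h.hPmono i h2; omega
  have hp1' : (0:ℚ) < ((P i - P (i - 1) : ℤ) : ℚ) := by exact_mod_cast hp1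
  have hp2' : (0:ℚ) < ((P (i + 1) - P i : ℤ) : ℚ) := by exact_mod_cast hp2
  rw [gt_iff_lt, div_lt_div_iff₀ hp2' hp1'] at hc
  have : (Q i - Q (i + 1)) * (P i - P (i - 1)) < (Q (i - 1) - Q i) * (P (i + 1) - P i) := by
    exact_mod_cast hc
  simpa [pp, qq, Nat.add_sub_cancel] using this

theorem cross (h : Datum n P Q) {i j : ℕ} (h1 : 1 ≤ i) (hij : i < j) (hj : j ≤ n) :
    qq Q j * pp P i < qq Q i * pp P j := by
  induction j, hij using Nat.le_induction with
  | base => exact cross_adj h h1 (by omega)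
  | succ j hij ih =>
    have hadj := cross_adj h (by omega : 1 ≤ j) (by omega : j < n)
    have ih' := ih (by omega)
    have hpj := ppos h (by omega : 1 ≤ j) (by omega : j ≤ n)
    have hpj1 := ppos h (by omega : 1 ≤ j + 1) hj
    have hpi := ppos h h1 (by omega : i ≤ n)
    have hqj := qpos h (by omega : 1 ≤ j) (by omega : j ≤ n)
    have hqj1 := qpos h (by omega : 1 ≤ j + 1) hj
    nlinarith

/-- vertex (P j, Q j) lies on the correct side of edge line i -/
theorem vertex (h : Datum n P Q) {i j : ℕ} (h1 : 1 ≤ i) (h2 : i ≤ n) (hj : j ≤ n) :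
    cc P Q i ≤ qq Q i * P j + pp P i * Q j := by
  rcases le_or_gt i j with hij | hij
  · -- induct upward from i
    induction j, hij using Nat.le_induction with
    | base => simp only [cc]; nlinarith [le_refl (0:ℤ)]
    | succ j hij ih =>
      have ih' := ih (by omega)
      have step : qq Q i * pp P (j + 1) ≥ pp P i * qq Q (j + 1) := by
        have := cross h h1 (by omega : i < j + 1) hj
        linarith
      have hpp : pp P (j + 1) = P (j + 1) - P j := by simp [pp]
      have hqq : qq Q (j + 1) = Q j - Q (j + 1) := by simp [qq]
      rw [hpp, hqq] at step
      nlinarith [step]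
  · -- induct downward from i: show for all m, value at (i - m)
    have key : ∀ m, m ≤ i → cc P Q i ≤ qq Q i * P (i - m) + pp P i * Q (i - m) := by
      intro m
      induction m with
      | zero => intro _; simp only [Nat.sub_zero, cc]; nlinarith [le_refl (0:ℤ)]
      | succ m ih =>
        intro hm
        have ih' := ih (by omega)
        set j := i - (m + 1) with hjdef
        have hiq : i - m = j + 1 := by omega
        rw [hiq] at ih'
        have step : pp P i * qq Q (j + 1) ≥ qq Q i * pp P (j + 1) := by
          rcases Nat.eq_or_lt_of_le (show j + 1 ≤ i by omega) with heq | hlt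
          · rw [heq]; exact le_of_eq (mul_comm _ _)
          · have := cross h (by omega : 1 ≤ j + 1) hlt h2
            linarith
        have hpp : pp P (j + 1) = P (j + 1) - P j := by simp [pp]
        have hqq : qq Q (j + 1) = Q j - Q (j + 1) := by simp [qq]
        rw [hpp, hqq] at step
        nlinarith [step]
    have := key (i - j) (by omega)
    have hij' : i - (i - j) = j := by omega
    rwa [hij'] at this

/-- strip domination: for `P (j-1) ≤ a ≤ P j`, edge line j dominates all others -/
theorem strip (h : Datum n P Q) {i j : ℕ} (hi1 : 1 ≤ i) (hi2 : i ≤ n)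
    (hj1 : 1 ≤ j) (hj2 : j ≤ n) {a : ℤ}
    (ha1 : P (j - 1) ≤ a) (ha2 : a ≤ P j) :
    pp P j * (cc P Q i - qq Q i * a) ≤ pp P i * (cc P Q j - qq Q j * a) := by
  set C : ℤ := pp P i * cc P Q j - pp P j * cc P Q i with hC
  set D : ℤ := pp P i * qq Q j - pp P j * qq Q i with hD
  -- endpoint values
  have hAjr : cc P Q j - qq Q j * P j = pp P j * Q j := by simp only [cc]; ring
  have hAjl : cc P Q j - qq Q j * P (j - 1) = pp P j * Q (j - 1) := by
    simp [cc, pp, qq]; ring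
  have hvr := vertex h hi1 hi2 hj2
  have hvl := vertex h hi1 hi2 (show j - 1 ≤ n by omega)
  have hFr : 0 ≤ C - D * P j := by
    have : pp P j * (cc P Q i - qq Q i * P j) ≤ pp P i * (cc P Q j - qq Q j * P j) := by
      rw [hAjr]
      have : cc P Q i - qq Q i * P j ≤ pp P i * Q j := by linarith
      calc pp P j * (cc P Q i - qq Q i * P j) ≤ pp P j * (pp P i * Q j) :=
            mul_le_mul_of_nonneg_left this (le_of_lt (ppos h hj1 hj2))
        _ = pp P i * (pp P j * Q j) := by ring
    have hid : C - D * P j =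
        pp P i * (cc P Q j - qq Q j * P j) - pp P j * (cc P Q i - qq Q i * P j) := by
      rw [hC, hD]; ring
    linarith [this, hid.ge, hid.le]
  have hFl : 0 ≤ C - D * P (j - 1) := by
    have : pp P j * (cc P Q i - qq Q i * P (j - 1)) ≤ pp P i * (cc P Q j - qq Q j * P (j - 1)) := by
      rw [hAjl]
      have : cc P Q i - qq Q i * P (j - 1) ≤ pp P i * Q (j - 1) := by linarith
      calc pp P j * (cc P Q i - qq Q i * P (j - 1)) ≤ pp P j * (pp P i * Q (j - 1)) :=
            mul_le_mul_of_nonneg_left this (le_of_lt (ppos h hj1 hj2))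
        _ = pp P i * (pp P j * Q (j - 1)) := by ring
    have hid : C - D * P (j - 1) =
        pp P i * (cc P Q j - qq Q j * P (j - 1)) - pp P j * (cc P Q i - qq Q i * P (j - 1)) := by
      rw [hC, hD]; ring
    linarith [this, hid.ge, hid.le]
  have key : 0 ≤ C - D * a := by
    rcases le_or_gt 0 D with hD0 | hD0
    · have : D * a ≤ D * P j := mul_le_mul_of_nonneg_left ha2 hD0
      linarith
    · have : D * a ≤ D * P (j - 1) := by
        have := mul_le_mul_of_nonpos_left ha1 (le_of_lt hD0)
        linarith [this]
      linarith
  have hid : C - D * a =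
      pp P i * (cc P Q j - qq Q j * a) - pp P j * (cc P Q i - qq Q i * a) := by
    rw [hC, hD]; ring
  linarith [key, hid.ge, hid.le]

end ND


namespace ND

theorem ediv_sub_one {p x : ℤ} (hp : 0 < p) (hnd : ¬ p ∣ x) : (x - 1) / p = x / p := by
  have h0 := Int.emod_emod_of_dvd x (dvd_refl p)
  have h1 : x % p ≠ 0 := fun hh => hnd (Int.dvd_of_emod_eq_zero hh)
  have h2 : 0 ≤ x % p := Int.emod_nonneg x (ne_of_gt hp)
  have h3 : x % p < p := Int.emod_lt_of_pos x hp
  have h4 : x = p * (x / p) + x % p := (Int.mul_ediv_add_emod x p).symm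
  have : (x - 1) = (x % p - 1) + (x / p) * p := by linarith
  rw [this, Int.add_mul_ediv_right _ _ (ne_of_gt hp), Int.ediv_eq_zero_of_lt (by omega) (by omega)]
  omega

theorem ediv_neg_add {p x : ℤ} (hp : 0 < p) (hnd : ¬ p ∣ x) : x / p + (-x) / p = -1 := by
  have h1 : x % p ≠ 0 := fun hh => hnd (Int.dvd_of_emod_eq_zero hh)
  have h2 : 0 ≤ x % p := Int.emod_nonneg x (ne_of_gt hp)
  have h3 : x % p < p := Int.emod_lt_of_pos x hp
  have h4 : x = p * (x / p) + x % p := (Int.mul_ediv_add_emod x p).symm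
  have h5 : -x = (p - x % p) + (-(x / p) - 1) * p := by linarith
  have h6 : (p - x % p) / p = 0 := Int.ediv_eq_zero_of_lt (by omega) (by omega)
  rw [h5, Int.add_mul_ediv_right _ _ (ne_of_gt hp), h6]
  ring

theorem not_dvd_mul {p q s : ℤ} (hp : 0 < p) (hcop : Int.gcd p q = 1)
    (hs1 : 1 ≤ s) (hs2 : s < p) : ¬ p ∣ q * s := by
  intro hdvd
  have hc : IsCoprime p q := Int.isCoprime_iff_gcd_eq_one.mpr hcop
  have : p ∣ s := hc.dvd_of_dvd_mul_left hdvd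
  have := Int.le_of_dvd (by omega) this
  omega

/-- Gauss's counting lemma -/
theorem gauss_sum {p q : ℤ} (hp : 0 < p) (hq : 0 < q) (hcop : Int.gcd p q = 1) :
    ∑ s ∈ Finset.Ico (1 : ℤ) p, q * s / p = (p - 1) * (q - 1) / 2 := by
  have hrefl : ∑ s ∈ Finset.Ico (1 : ℤ) p, q * s / p
      = ∑ s ∈ Finset.Ico (1 : ℤ) p, q * (p - s) / p := by
    apply Finset.sum_nbij' (fun s => p - s) (fun s => p - s)
    · intro a ha; simp only [Finset.mem_Ico] at *; omega
    · intro a ha; simp only [Finset.mem_Ico] at *; omega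
    · intro a _; ring_nf
    · intro a _; ring_nf
    · intro a _; ring_nf
  have hpair : ∀ s ∈ Finset.Ico (1 : ℤ) p, q * s / p + q * (p - s) / p = q - 1 := by
    intro s hs
    simp only [Finset.mem_Ico] at hs
    have hnd := not_dvd_mul hp hcop hs.1 hs.2
    have h1 : q * (p - s) = -(q * s) + q * p := by ring
    rw [h1, Int.add_mul_ediv_right _ _ (ne_of_gt hp)]
    have := ediv_neg_add hp hnd
    omega
  have h2 : 2 * ∑ s ∈ Finset.Ico (1 : ℤ) p, q * s / p = (p - 1) * (q - 1) := by
    have : 2 * ∑ s ∈ Finset.Ico (1 : ℤ) p, q * s / p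
        = ∑ s ∈ Finset.Ico (1 : ℤ) p, (q * s / p + q * (p - s) / p) := by
      rw [Finset.sum_add_distrib, ← hrefl]; ring
    rw [this, Finset.sum_congr rfl hpair, Finset.sum_const, Int.card_Ico,
      nsmul_eq_mul, Int.toNat_of_nonneg (by omega)]
  omega

end ND

namespace ND

theorem strip_sum {p q m l : ℤ} (hp : 0 < p) (hq : 0 < q) (hcop : Int.gcd p q = 1)
    (hm : 0 ≤ m) :
    ∑ a ∈ Finset.Ioc l (l + p), (((p * m + q * (l + p - a) - 1) / p).toNat : ℤ)
      = (p - 1) * (q - 1) / 2 + (p - 1) * m + ((m - 1).toNat : ℤ) := by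
  have hre : ∑ a ∈ Finset.Ioc l (l + p), (((p * m + q * (l + p - a) - 1) / p).toNat : ℤ)
      = ∑ s ∈ Finset.Ico (0 : ℤ) p, (((p * m + q * s - 1) / p).toNat : ℤ) := by
    apply Finset.sum_nbij' (fun a => l + p - a) (fun s => l + p - s)
    · intro a ha; simp only [Finset.mem_Ioc, Finset.mem_Ico] at *; omega
    · intro a ha; simp only [Finset.mem_Ioc, Finset.mem_Ico] at *; omega
    · intro a _; ring_nf
    · intro a _; ring_nf
    · intro a _; ring_nf
  rw [hre]
  have hsplit : Finset.Ico (0 : ℤ) p = insert 0 (Finset.Ico (1 : ℤ) p) := by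
    ext x; simp only [Finset.mem_Ico, Finset.mem_insert]; omega
  rw [hsplit, Finset.sum_insert (by simp)]
  have hf0 : ((p * m + q * 0 - 1) / p).toNat = (m - 1).toNat := by
    have h1 : p * m + q * 0 - 1 = (p - 1) + (m - 1) * p := by ring
    have h2 : (p - 1) / p = 0 := Int.ediv_eq_zero_of_lt (by omega) (by omega)
    rw [h1, Int.add_mul_ediv_right _ _ (ne_of_gt hp), h2, zero_add]
  have hfs : ∀ s ∈ Finset.Ico (1 : ℤ) p,
      (((p * m + q * s - 1) / p).toNat : ℤ) = m + q * s / p := by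
    intro s hs
    simp only [Finset.mem_Ico] at hs
    have hnd := not_dvd_mul hp hcop hs.1 hs.2
    have h1 : p * m + q * s - 1 = (q * s - 1) + m * p := by ring
    rw [h1, Int.add_mul_ediv_right _ _ (ne_of_gt hp), ediv_sub_one hp hnd]
    have hge : 0 ≤ q * s / p + m :=
      add_nonneg (Int.ediv_nonneg (mul_nonneg (by omega) (by omega)) (le_of_lt hp)) hm
    rw [show q * s / p + m = m + q * s / p by ring] at hge
    rw [show q * s / p + m = m + q * s / p by ring, Int.toNat_of_nonneg hge]
  rw [Finset.sum_congr rfl hfs, Finset.sum_add_distrib, gauss_sum hp hq hcop,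
    Finset.sum_const, Int.card_Ico, nsmul_eq_mul, hf0,
    Int.toNat_of_nonneg (show (0:ℤ) ≤ p - 1 by omega)]
  ring

end ND


namespace ND

variable {n : ℕ} {P Q : ℕ → ℤ}

/-- the open region that will turn out to be the interior of `Γ₋` -/
def U (n : ℕ) (P Q : ℕ → ℤ) : Set (ℝ × ℝ) :=
  {z : ℝ × ℝ | 0 < z.1 ∧ 0 < z.2 ∧ ∃ i, 1 ≤ i ∧ i ≤ n ∧
    (qq Q i : ℝ) * z.1 + (pp P i : ℝ) * z.2 < (cc P Q i : ℝ)}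

/-- a closed superset of `Qd \ D` -/
def Cl (n : ℕ) (P Q : ℕ → ℤ) : Set (ℝ × ℝ) :=
  {z : ℝ × ℝ | 0 ≤ z.1 ∧ 0 ≤ z.2 ∧ ∃ i, 1 ≤ i ∧ i ≤ n ∧
    (qq Q i : ℝ) * z.1 + (pp P i : ℝ) * z.2 ≤ (cc P Q i : ℝ)}

theorem hull_subset (h : Datum n P Q) :
    convexHull ℝ {x : ℝ × ℝ | ∃ i ≤ n, x = ((P i : ℝ), (Q i : ℝ))} ⊆
      {z : ℝ × ℝ | 0 ≤ z.1 ∧ 0 ≤ z.2 ∧ ∀ i, 1 ≤ i → i ≤ n →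
        (cc P Q i : ℝ) ≤ (qq Q i : ℝ) * z.1 + (pp P i : ℝ) * z.2} := by
  apply convexHull_min
  · rintro x ⟨j, hj, rfl⟩
    refine ⟨?_, ?_, ?_⟩
    · show (0:ℝ) ≤ (P j : ℝ); exact_mod_cast Pnonneg h hj
    · show (0:ℝ) ≤ (Q j : ℝ); exact_mod_cast Qnonneg h hj
    · intro i h1 h2
      show (cc P Q i : ℝ) ≤ (qq Q i : ℝ) * (P j : ℝ) + (pp P i : ℝ) * (Q j : ℝ)
      exact_mod_cast vertex h h1 h2 hj
  · intro x hx y hy a b ha hb hab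
    obtain ⟨hx1, hx2, hx3⟩ := hx
    obtain ⟨hy1, hy2, hy3⟩ := hy
    have h1 : (a • x + b • y).1 = a * x.1 + b * y.1 := by
      simp [Prod.fst_add, Prod.smul_fst, smul_eq_mul]
    have h2 : (a • x + b • y).2 = a * x.2 + b * y.2 := by
      simp [Prod.snd_add, Prod.smul_snd, smul_eq_mul]
    refine ⟨by rw [h1]; positivity, by rw [h2]; positivity, ?_⟩
    intro i hi1 hi2
    rw [h1, h2]
    have e1 := mul_le_mul_of_nonneg_left (hx3 i hi1 hi2) ha
    have e2 := mul_le_mul_of_nonneg_left (hy3 i hi1 hi2) hb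
    calc (cc P Q i : ℝ) = a * (cc P Q i : ℝ) + b * (cc P Q i : ℝ) := by
          rw [← add_mul, hab, one_mul]
      _ ≤ a * ((qq Q i : ℝ) * x.1 + (pp P i : ℝ) * x.2)
          + b * ((qq Q i : ℝ) * y.1 + (pp P i : ℝ) * y.2) := add_le_add e1 e2
      _ = (qq Q i : ℝ) * (a * x.1 + b * y.1) + (pp P i : ℝ) * (a * x.2 + b * y.2) := by ring

theorem D_subset (h : Datum n P Q) :
    (convexHull ℝ {x : ℝ × ℝ | ∃ i ≤ n, x = ((P i : ℝ), (Q i : ℝ))} +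
        Set.Ici (0 : ℝ) ×ˢ Set.Ici (0 : ℝ)) ⊆
      {z : ℝ × ℝ | 0 ≤ z.1 ∧ 0 ≤ z.2 ∧ ∀ i, 1 ≤ i → i ≤ n →
        (cc P Q i : ℝ) ≤ (qq Q i : ℝ) * z.1 + (pp P i : ℝ) * z.2} := by
  rintro z ⟨k, hk, w, hw, rfl⟩
  obtain ⟨hk1, hk2, hk3⟩ := hull_subset h hk
  obtain ⟨hw1, hw2⟩ := hw
  simp only [Set.mem_Ici] at hw1 hw2
  refine ⟨by simp [Prod.fst_add]; linarith, by simp [Prod.snd_add]; linarith, ?_⟩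
  intro i h1 h2
  have hq : (0:ℝ) ≤ (qq Q i : ℝ) := by exact_mod_cast le_of_lt (qpos h h1 h2)
  have hp : (0:ℝ) ≤ (pp P i : ℝ) := by exact_mod_cast le_of_lt (ppos h h1 h2)
  have := hk3 i h1 h2
  simp only [Prod.fst_add, Prod.snd_add]
  nlinarith [mul_nonneg hq hw1, mul_nonneg hp hw2]

/-- find the strip of a real number -/
theorem find_strip (h : Datum n P Q) {x : ℝ} (hx0 : 0 ≤ x) (hxn : x < (P n : ℝ)) :
    ∃ j, 1 ≤ j ∧ j ≤ n ∧ ((P (j - 1) : ℤ) : ℝ) ≤ x ∧ x < ((P j : ℤ) : ℝ) := by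
  have key : ∀ m, 1 ≤ m → m ≤ n → x < (P m : ℝ) →
      ∃ j, 1 ≤ j ∧ j ≤ m ∧ ((P (j - 1) : ℤ) : ℝ) ≤ x ∧ x < ((P j : ℤ) : ℝ) := by
    intro m
    induction m with
    | zero => omega
    | succ m ih =>
      intro _ hm hxm
      rcases Nat.eq_zero_or_pos m with rfl | hm1
      · exact ⟨1, le_refl 1, le_refl 1, by simpa [h.hP0] using hx0, hxm⟩
      · rcases lt_or_ge x ((P m : ℤ) : ℝ) with hc | hc
        · obtain ⟨j, hj1, hj2, hj3, hj4⟩ := ih hm1 (by omega) hc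
          exact ⟨j, hj1, by omega, hj3, hj4⟩
        · exact ⟨m + 1, by omega, le_refl _, by simpa using hc, hxm⟩
  obtain ⟨j, hj1, hj2, hj3, hj4⟩ := key n h.hn (le_refl n) hxn
  exact ⟨j, hj1, hj2, hj3, hj4⟩

theorem compl_subset_Cl (h : Datum n P Q) :
    (Set.Ici (0 : ℝ) ×ˢ Set.Ici (0 : ℝ)) \
      (convexHull ℝ {x : ℝ × ℝ | ∃ i ≤ n, x = ((P i : ℝ), (Q i : ℝ))} +
        Set.Ici (0 : ℝ) ×ˢ Set.Ici (0 : ℝ)) ⊆ Cl n P Q := by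
  rintro z ⟨⟨hz1, hz2⟩, hzD⟩
  simp only [Set.mem_Ici] at hz1 hz2
  refine ⟨hz1, hz2, ?_⟩
  by_contra hcon
  push_neg at hcon
  apply hzD
  -- from ∀ i, c_i < ℓ_i z we build a decomposition z = hull point + nonneg
  have hS : ∀ j ≤ n, ((P j : ℝ), (Q j : ℝ)) ∈
      convexHull ℝ {x : ℝ × ℝ | ∃ i ≤ n, x = ((P i : ℝ), (Q i : ℝ))} :=
    fun j hj => subset_convexHull ℝ _ ⟨j, hj, rfl⟩
  rcases le_or_gt ((P n : ℤ) : ℝ) z.1 with hc | hc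
  · -- z is east of the last vertex
    refine ⟨((P n : ℝ), (Q n : ℝ)), hS n (le_refl n), (z.1 - P n, z.2 - Q n), ⟨?_, ?_⟩, ?_⟩
    · show (z.1 - (P n : ℝ)) ∈ Set.Ici (0:ℝ)
      simp only [Set.mem_Ici]; linarith
    · show (z.2 - (Q n : ℝ)) ∈ Set.Ici (0:ℝ)
      have hq0 : ((Q n : ℤ) : ℝ) = 0 := by rw [h.hQn]; simp
      simp only [Set.mem_Ici, hq0]; linarith
    · exact Prod.ext (by simp) (by simp)
  · -- z lies in some strip j
    obtain ⟨j, hj1, hj2, hj3, hj4⟩ := find_strip h hz1 hc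
    have hpj : (0:ℝ) < (pp P j : ℝ) := by exact_mod_cast ppos h hj1 hj2
    have hppj : ((pp P j : ℤ) : ℝ) = (P j : ℝ) - (P (j-1) : ℝ) := by
      simp [pp]
    obtain ⟨t, htp, ht0, ht1⟩ : ∃ t : ℝ, t * (pp P j : ℝ) = z.1 - (P (j-1) : ℝ)
        ∧ 0 ≤ t ∧ t < 1 := by
      refine ⟨(z.1 - (P (j-1) : ℝ)) / (pp P j : ℝ), ?_, ?_, ?_⟩
      · field_simp
      · exact div_nonneg (by linarith) (le_of_lt hpj)
      · rw [div_lt_one hpj, hppj]; linarith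
    set v : ℝ × ℝ := (1 - t) • ((P (j-1) : ℝ), (Q (j-1) : ℝ)) + t • ((P j : ℝ), (Q j : ℝ)) with hv
    have hvhull : v ∈ convexHull ℝ {x : ℝ × ℝ | ∃ i ≤ n, x = ((P i : ℝ), (Q i : ℝ))} :=
      (convex_convexHull ℝ _) (hS (j-1) (by omega)) (hS j hj2) (by linarith) ht0 (by ring)
    have hv1 : v.1 = z.1 := by
      simp only [hv, Prod.fst_add, Prod.smul_fst, smul_eq_mul]
      linear_combination htp - t * hppj
    have hqqj : ((qq Q j : ℤ) : ℝ) = (Q (j-1) : ℝ) - (Q j : ℝ) := by simp [qq]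
    have hv2 : v.2 ≤ z.2 := by
      have hli := hcon j hj1 hj2
      simp only [hv, Prod.snd_add, Prod.smul_snd, smul_eq_mul]
      -- p_j z.2 ≥ c_j - q_j z.1 and c_j - q_j z.1 = p_j ((1-t) Q_{j-1} + t Q_j)
      have hccj : (cc P Q j : ℝ) = (qq Q j : ℝ) * (P j : ℝ) + (pp P j : ℝ) * (Q j : ℝ) := by
        simp [cc]
      have hPj : (P j : ℝ) = (P (j-1) : ℝ) + (pp P j : ℝ) := by rw [hppj]; ring
      have hQj1 : (Q (j-1) : ℝ) = (Q j : ℝ) + (qq Q j : ℝ) := by rw [hqqj]; ring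
      -- expand everything
      rw [hQj1]
      have expand : (1 - t) * ((Q j : ℝ) + (qq Q j : ℝ)) + t * (Q j : ℝ)
          = (Q j : ℝ) + (1 - t) * (qq Q j : ℝ) := by ring
      rw [expand]
      -- from hli : c_j ≤ q_j z.1 + p_j z.2 (strict <, we have hcon gives <)
      -- c_j = q_j P_j + p_j Q_j ; q_j (P_j - z.1) = q_j (pp_j (1-t)) using htp, hPj
      have key : (qq Q j : ℝ) * ((P j : ℝ) - z.1) = (qq Q j : ℝ) * (pp P j : ℝ) * (1 - t) := by
        rw [hPj]
        linear_combination (qq Q j : ℝ) * htp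
      have h7 : (qq Q j : ℝ) * (pp P j : ℝ) * (1 - t) + (pp P j : ℝ) * (Q j : ℝ)
          ≤ (pp P j : ℝ) * z.2 := by nlinarith [hli, hccj, key]
      rw [← mul_le_mul_iff_of_pos_left hpj]
      nlinarith [h7]
    refine ⟨v, hvhull, (0, z.2 - v.2), ⟨by simp, by simp; linarith⟩, ?_⟩
    ext
    · simp [hv1]
    · simp

theorem Cl_closed (h : Datum n P Q) : IsClosed (Cl n P Q) := by
  have : Cl n P Q = (Set.Ici (0:ℝ) ×ˢ Set.Ici (0:ℝ)) ∩
      (⋃ i ∈ Finset.Icc 1 n, {z : ℝ × ℝ |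
        (qq Q i : ℝ) * z.1 + (pp P i : ℝ) * z.2 ≤ (cc P Q i : ℝ)}) := by
    ext z
    simp only [Cl, Set.mem_setOf_eq, Set.mem_inter_iff, Set.mem_prod, Set.mem_Ici,
      Set.mem_iUnion, Finset.mem_Icc, exists_prop]
    constructor
    · rintro ⟨a, b, i, c, d, e⟩; exact ⟨⟨a, b⟩, i, ⟨c, d⟩, e⟩
    · rintro ⟨⟨a, b⟩, i, ⟨c, d⟩, e⟩; exact ⟨a, b, i, c, d, e⟩
  rw [this]
  apply IsClosed.inter (isClosed_Ici.prod isClosed_Ici)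
  apply Set.Finite.isClosed_biUnion (Finset.finite_toSet _)
  intro i _
  exact isClosed_le (by continuity) continuous_const

theorem U_open (h : Datum n P Q) : IsOpen (U n P Q) := by
  have : U n P Q = ({z : ℝ × ℝ | 0 < z.1} ∩ {z : ℝ × ℝ | 0 < z.2}) ∩
      (⋃ i ∈ Finset.Icc 1 n, {z : ℝ × ℝ |
        (qq Q i : ℝ) * z.1 + (pp P i : ℝ) * z.2 < (cc P Q i : ℝ)}) := by
    ext z
    simp only [U, Set.mem_setOf_eq, Set.mem_inter_iff, Set.mem_iUnion, Finset.mem_Icc,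
      exists_prop]
    constructor
    · rintro ⟨a, b, i, c, d, e⟩; exact ⟨⟨a, b⟩, i, ⟨c, d⟩, e⟩
    · rintro ⟨⟨a, b⟩, i, ⟨c, d⟩, e⟩; exact ⟨a, b, i, c, d, e⟩
  rw [this]
  apply IsOpen.inter
  · exact IsOpen.inter (isOpen_lt continuous_const continuous_fst)
      (isOpen_lt continuous_const continuous_snd)
  · apply isOpen_biUnion
    intro i _
    exact isOpen_lt (by continuity) continuous_const

end ND

namespace ND

theorem interior_eq (h : Datum n P Q) :
    interior (closure ((Set.Ici (0 : ℝ) ×ˢ Set.Ici (0 : ℝ)) \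
      (convexHull ℝ {x : ℝ × ℝ | ∃ i ≤ n, x = ((P i : ℝ), (Q i : ℝ))} +
        Set.Ici (0 : ℝ) ×ˢ Set.Ici (0 : ℝ)))) = U n P Q := by
  apply subset_antisymm
  · have h1 := interior_mono (closure_minimal (compl_subset_Cl h) (Cl_closed h))
    refine h1.trans ?_
    intro z hz
    rw [mem_interior_iff_mem_nhds, Metric.mem_nhds_iff] at hz
    obtain ⟨ε, hε, hball⟩ := hz
    have hzC : z ∈ Cl n P Q := hball (Metric.mem_ball_self hε)
    obtain ⟨hz1, hz2, -⟩ := hzC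
    have hw1 : ((z.1 - ε/2, z.2) : ℝ × ℝ) ∈ Cl n P Q := by
      apply hball
      rw [Metric.mem_ball, Prod.dist_eq]
      simp only [dist_self]
      rw [Real.dist_eq, show z.1 - ε/2 - z.1 = -(ε/2) by ring, abs_neg,
        abs_of_nonneg (by linarith), max_eq_left (by linarith)]
      linarith
    have hw2 : ((z.1, z.2 - ε/2) : ℝ × ℝ) ∈ Cl n P Q := by
      apply hball
      rw [Metric.mem_ball, Prod.dist_eq]
      simp only [dist_self]
      rw [Real.dist_eq, show z.2 - ε/2 - z.2 = -(ε/2) by ring, abs_neg,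
        abs_of_nonneg (by linarith), max_eq_right (by linarith)]
      linarith
    refine ⟨by have := hw1.1; simp at this; linarith,
            by have := hw2.2.1; simp at this; linarith, ?_⟩
    by_contra hno
    push_neg at hno
    have hw3 : ((z.1 + ε/2, z.2 + ε/2) : ℝ × ℝ) ∈ Cl n P Q := by
      apply hball
      rw [Metric.mem_ball, Prod.dist_eq]
      rw [Real.dist_eq, Real.dist_eq, show z.1 + ε/2 - z.1 = ε/2 by ring,
        show z.2 + ε/2 - z.2 = ε/2 by ring, abs_of_nonneg (by linarith), max_self]
      linarith
    obtain ⟨-, -, i, hi1, hi2, hile⟩ := hw3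
    have hge := hno i hi1 hi2
    have hqp : (0:ℝ) < (qq Q i : ℝ) := by exact_mod_cast qpos h hi1 hi2
    have hpp' : (0:ℝ) < (pp P i : ℝ) := by exact_mod_cast ppos h hi1 hi2
    simp only at hile
    nlinarith [hile, hge, hqp, hpp', hε]
  · have hUsub : U n P Q ⊆ (Set.Ici (0 : ℝ) ×ˢ Set.Ici (0 : ℝ)) \
        (convexHull ℝ {x : ℝ × ℝ | ∃ i ≤ n, x = ((P i : ℝ), (Q i : ℝ))} +
          Set.Ici (0 : ℝ) ×ˢ Set.Ici (0 : ℝ)) := by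
      rintro z ⟨hz1, hz2, i, hi1, hi2, hil⟩
      refine ⟨⟨le_of_lt hz1, le_of_lt hz2⟩, ?_⟩
      intro hzD
      obtain ⟨-, -, h3⟩ := D_subset h hzD
      exact absurd hil (not_lt.mpr (h3 i hi1 hi2))
    exact interior_maximal (hUsub.trans subset_closure) (U_open h)

end ND


namespace ND

variable {n : ℕ} {P Q : ℕ → ℤ}

open scoped Classical in
/-- the finite set of lattice points -/
noncomputable def T (n : ℕ) (P Q : ℕ → ℤ) : Finset (ℤ × ℤ) :=
  (Finset.Ioc (0:ℤ) (P n) ×ˢ Finset.Ioc (0:ℤ) (Q 0)).filter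
    (fun ab => ∃ i ∈ Finset.Icc 1 n, qq Q i * ab.1 + pp P i * ab.2 < cc P Q i)

theorem cond_bounds (h : Datum n P Q) {a b : ℤ} (ha : 0 < a) (hb : 0 < b)
    {i : ℕ} (hi1 : 1 ≤ i) (hi2 : i ≤ n)
    (hcond : qq Q i * a + pp P i * b < cc P Q i) : a ≤ P n ∧ b ≤ Q 0 := by
  have hv1 := vertex h hi1 hi2 (le_refl n)
  have hv2 := vertex h hi1 hi2 (Nat.zero_le n)
  rw [h.hQn, mul_zero, add_zero] at hv1
  rw [h.hP0, mul_zero, zero_add] at hv2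
  have hp := ppos h hi1 hi2
  have hq := qpos h hi1 hi2
  constructor
  · nlinarith
  · nlinarith

theorem mem_T (h : Datum n P Q) {ab : ℤ × ℤ} :
    ab ∈ T n P Q ↔ 0 < ab.1 ∧ 0 < ab.2 ∧ ∃ i, 1 ≤ i ∧ i ≤ n ∧
      qq Q i * ab.1 + pp P i * ab.2 < cc P Q i := by
  simp only [T, Finset.mem_filter, Finset.mem_product, Finset.mem_Ioc, Finset.mem_Icc]
  constructor
  · rintro ⟨⟨⟨ha1, -⟩, hb1, -⟩, i, ⟨hi1, hi2⟩, hcond⟩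
    exact ⟨ha1, hb1, i, hi1, hi2, hcond⟩
  · rintro ⟨ha1, hb1, i, hi1, hi2, hcond⟩
    obtain ⟨hbd1, hbd2⟩ := cond_bounds h ha1 hb1 hi1 hi2 hcond
    exact ⟨⟨⟨ha1, hbd1⟩, hb1, hbd2⟩, i, ⟨hi1, hi2⟩, hcond⟩

theorem E_eq (h : Datum n P Q) :
    {x : ℝ × ℝ | x ∈ U n P Q ∧ ∃ a b : ℤ, x = ((a : ℝ), (b : ℝ))} =
      (fun ab : ℤ × ℤ => ((ab.1 : ℝ), (ab.2 : ℝ))) '' ↑(T n P Q) := by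
  ext z
  simp only [Set.mem_setOf_eq, Set.mem_image, Finset.mem_coe]
  constructor
  · rintro ⟨⟨hz1, hz2, i, hi1, hi2, hcond⟩, a, b, rfl⟩
    refine ⟨(a, b), ?_, rfl⟩
    rw [mem_T h]
    have ha : (0:ℝ) < (a:ℝ) := hz1
    have hb : (0:ℝ) < (b:ℝ) := hz2
    have hc : (qq Q i : ℝ) * (a:ℝ) + (pp P i : ℝ) * (b:ℝ) < (cc P Q i : ℝ) := hcond
    exact ⟨show (0:ℤ) < a by exact_mod_cast ha, show (0:ℤ) < b by exact_mod_cast hb,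
      i, hi1, hi2, show qq Q i * a + pp P i * b < cc P Q i by exact_mod_cast hc⟩
  · rintro ⟨⟨a, b⟩, hab, rfl⟩
    rw [mem_T h] at hab
    obtain ⟨ha, hb, i, hi1, hi2, hcond⟩ := hab
    have ha' : (0:ℤ) < a := ha
    have hb' : (0:ℤ) < b := hb
    have hc' : qq Q i * a + pp P i * b < cc P Q i := hcond
    refine ⟨⟨show (0:ℝ) < ((a:ℤ):ℝ) by exact_mod_cast ha',
      show (0:ℝ) < ((b:ℤ):ℝ) by exact_mod_cast hb', i, hi1, hi2,
      show (qq Q i : ℝ) * ((a:ℤ):ℝ) + (pp P i : ℝ) * ((b:ℤ):ℝ) < (cc P Q i : ℝ)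
        by exact_mod_cast hc'⟩, a, b, rfl⟩

open scoped Classical in
/-- the column of lattice points over `a` -/
noncomputable def col (n : ℕ) (P Q : ℕ → ℤ) (a : ℤ) : Finset ℤ :=
  (Finset.Ioc (0:ℤ) (Q 0)).filter
    (fun b => ∃ i ∈ Finset.Icc 1 n, qq Q i * a + pp P i * b < cc P Q i)

theorem col_card (h : Datum n P Q) {j : ℕ} (hj1 : 1 ≤ j) (hj2 : j ≤ n) {a : ℤ}
    (ha1 : P (j - 1) < a) (ha2 : a ≤ P j) :
    (col n P Q a : Finset ℤ).card = ((cc P Q j - qq Q j * a - 1) / pp P j).toNat := by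
  have hp := ppos h hj1 hj2
  have hq := qpos h hj1 hj2
  have ha0 : 0 < a := by
    have := Pnonneg h (show j - 1 ≤ n by omega); omega
  set B : ℤ := (cc P Q j - qq Q j * a - 1) / pp P j with hB
  have hcond_iff : ∀ b : ℤ, (∃ i ∈ Finset.Icc 1 n, qq Q i * a + pp P i * b < cc P Q i)
      ↔ b ≤ B := by
    intro b
    rw [hB, Int.le_ediv_iff_mul_le hp]
    constructor
    · rintro ⟨i, hi, hcond⟩
      simp only [Finset.mem_Icc] at hi
      have hstrip := strip h hi.1 hi.2 hj1 hj2 (le_of_lt ha1) ha2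
      have hpi := ppos h hi.1 hi.2
      -- pp i * (pp j * b) < pp i * (cc j - qq j * a)
      have h1 : pp P j * (pp P i * b) < pp P i * (cc P Q j - qq Q j * a) := by
        calc pp P j * (pp P i * b) < pp P j * (cc P Q i - qq Q i * a) := by
              apply mul_lt_mul_of_pos_left _ hp
              linarith
          _ ≤ pp P i * (cc P Q j - qq Q j * a) := hstrip
      have h2 : pp P i * (b * pp P j) < pp P i * (cc P Q j - qq Q j * a) := by
        calc pp P i * (b * pp P j) = pp P j * (pp P i * b) := by ring
          _ < _ := h1
      have := lt_of_mul_lt_mul_left h2 (le_of_lt hpi)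
      linarith
    · intro hb
      exact ⟨j, Finset.mem_Icc.mpr ⟨hj1, hj2⟩, by linarith⟩
  have hBle : B ≤ Q 0 := by
    have hv := vertex h hj1 hj2 (Nat.zero_le n)
    rw [h.hP0, mul_zero, zero_add] at hv
    have hnum : cc P Q j - qq Q j * a - 1 ≤ pp P j * Q 0 - 2 := by nlinarith
    have : B ≤ (pp P j * Q 0 - 2) / pp P j := by
      rw [hB]; exact Int.ediv_le_ediv hp hnum
    have h2 : (pp P j * Q 0 - 2) / pp P j ≤ Q 0 := by
      have : pp P j * Q 0 - 2 = (pp P j - 2) + (Q 0 - 1) * pp P j := by ring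
      rw [this, Int.add_mul_ediv_right _ _ (ne_of_gt hp)]
      have : (pp P j - 2) / pp P j ≤ 1 := by
        apply Int.ediv_le_of_le_mul hp; omega
      omega
    omega
  have hcol : col n P Q a = Finset.Ioc 0 B := by
    ext b
    simp only [col, Finset.mem_filter, Finset.mem_Ioc, hcond_iff b]
    constructor
    · rintro ⟨⟨hb1, -⟩, hb2⟩; exact ⟨hb1, hb2⟩
    · rintro ⟨hb1, hb2⟩; exact ⟨⟨hb1, le_trans hb2 hBle⟩, hb2⟩
  rw [hcol, Int.card_Ioc]
  norm_num

end ND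

namespace ND

theorem fiber_card (h : Datum n P Q) {a : ℤ} (ha0 : 0 < a) :
    ((T n P Q).filter (fun x => x.1 = a)).card = (col n P Q a).card := by
  apply Finset.card_bij (fun x _ => x.2)
  · rintro ⟨a', b⟩ hx
    simp only [Finset.mem_filter] at hx
    obtain ⟨hT, rfl⟩ := hx
    rw [mem_T h] at hT
    obtain ⟨ha, hb, i, hi1, hi2, hcond⟩ := hT
    simp only [col, Finset.mem_filter, Finset.mem_Ioc]
    have := (cond_bounds h ha hb hi1 hi2 hcond).2
    exact ⟨⟨hb, this⟩, i, Finset.mem_Icc.mpr ⟨hi1, hi2⟩, hcond⟩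
  · rintro ⟨a1, b1⟩ h1 ⟨a2, b2⟩ h2 heq
    simp only [Finset.mem_filter] at h1 h2
    simp only at heq
    simp [h1.2, h2.2, heq]
  · intro b hb
    simp only [col, Finset.mem_filter, Finset.mem_Ioc] at hb
    obtain ⟨⟨hb1, hb2⟩, i, hi, hcond⟩ := hb
    rw [Finset.mem_Icc] at hi
    refine ⟨(a, b), ?_, rfl⟩
    simp only [Finset.mem_filter]
    refine ⟨?_, by simp⟩
    rw [mem_T h]
    exact ⟨ha0, hb1, i, hi.1, hi.2, hcond⟩

theorem sum_strips (h : Datum n P Q) (F : ℤ → ℤ) :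
    ∀ m, m ≤ n → ∑ a ∈ Finset.Ioc (P 0) (P m), F a
      = ∑ j ∈ Finset.Icc 1 m, ∑ a ∈ Finset.Ioc (P (j - 1)) (P j), F a := by
  intro m
  induction m with
  | zero => simp
  | succ m ih =>
    intro hm
    rw [← Finset.Ioc_union_Ioc_eq_Ioc (Pmono' h (Nat.zero_le m) (by omega))
        (le_of_lt (h.hPmono m (by omega))),
      Finset.sum_union (Finset.disjoint_left.mpr (fun x hx1 hx2 => by rw [Finset.mem_Ioc] at hx1 hx2; omega))]
    rw [ih (by omega), Finset.sum_Icc_succ_top (by omega : 1 ≤ m + 1)]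
    simp only [Nat.add_sub_cancel]

theorem strip_value (h : Datum n P Q) {j : ℕ} (hj1 : 1 ≤ j) (hj2 : j ≤ n) :
    ∑ a ∈ Finset.Ioc (P (j - 1)) (P j), ((col n P Q a).card : ℤ)
      = (pp P j - 1) * (qq Q j - 1) / 2 + (pp P j - 1) * Q j + ((Q j - 1).toNat : ℤ) := by
  have hp := ppos h hj1 hj2
  have hq := qpos h hj1 hj2
  have hPj : P j = P (j - 1) + pp P j := by simp [pp]
  have hcongr : ∀ a ∈ Finset.Ioc (P (j - 1)) (P j), ((col n P Q a).card : ℤ)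
      = (((pp P j * Q j + qq Q j * (P (j - 1) + pp P j - a) - 1) / pp P j).toNat : ℤ) := by
    intro a ha
    rw [Finset.mem_Ioc] at ha
    rw [col_card h hj1 hj2 ha.1 ha.2]
    congr 2
    simp only [cc]
    rw [← hPj]
    ring
  rw [Finset.sum_congr rfl hcongr]
  have hIoc : Finset.Ioc (P (j - 1)) (P j) = Finset.Ioc (P (j - 1)) (P (j - 1) + pp P j) := by
    rw [← hPj]
  rw [hIoc]
  exact strip_sum hp hq (h.hgcd j hj1 hj2) (Qnonneg h hj2)

theorem T_card (h : Datum n P Q) :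
    ((T n P Q).card : ℤ) =
      (∑ i ∈ Finset.Icc 1 n, (pp P i - 1) * (qq Q i - 1) / 2)
      + ((∑ i ∈ Finset.Icc 1 n, (pp P i - 1) * Q i)
      + (∑ i ∈ Finset.Icc 1 n, ((Q i - 1).toNat : ℤ))) := by
  have h1 : (T n P Q).card = ∑ a ∈ Finset.Ioc (0:ℤ) (P n),
      ((T n P Q).filter (fun x => x.1 = a)).card := by
    apply Finset.card_eq_sum_card_fiberwise
    intro x hx
    rw [Finset.mem_coe, mem_T h] at hx
    obtain ⟨ha, hb, i, hi1, hi2, hcond⟩ := hx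
    rw [Finset.mem_coe, Finset.mem_Ioc]
    exact ⟨ha, (cond_bounds h ha hb hi1 hi2 hcond).1⟩
  have h2 : ((T n P Q).card : ℤ) = ∑ a ∈ Finset.Ioc (P 0) (P n), ((col n P Q a).card : ℤ) := by
    rw [h1, h.hP0]
    push_cast
    refine Finset.sum_congr rfl (fun a ha => ?_)
    rw [Finset.mem_Ioc] at ha
    rw [fiber_card h ha.1]
  rw [h2, sum_strips h _ n (le_refl n)]
  rw [Finset.sum_congr rfl (fun j hj => strip_value h (Finset.mem_Icc.mp hj).1
    (Finset.mem_Icc.mp hj).2)]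
  rw [Finset.sum_add_distrib, Finset.sum_add_distrib]
  ring

theorem final_alg (h : Datum n P Q) :
    (∑ i ∈ Finset.Icc 1 n, (pp P i - 1) * Q i)
      + (∑ i ∈ Finset.Icc 1 n, ((Q i - 1).toNat : ℤ))
    = (∑ i ∈ Finset.Icc 1 (n - 1), pp P i * Q i) - ((n : ℤ) - 1) := by
  obtain ⟨k, rfl⟩ : ∃ k, n = k + 1 := ⟨n - 1, by have := h.hn; omega⟩
  have hQpos : ∀ j ∈ Finset.Icc 1 k, 1 ≤ Q j := by
    intro j hj
    rw [Finset.mem_Icc] at hj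
    have h1 : Q k ≤ Q j := Qmono' h hj.2 (by omega)
    have h2 : Q (k + 1) < Q k := h.hQmono k (by omega)
    have h3 : Q (k + 1) = 0 := h.hQn
    omega
  rw [Finset.sum_Icc_succ_top (by omega : 1 ≤ k + 1),
    Finset.sum_Icc_succ_top (by omega : 1 ≤ k + 1), h.hQn]
  simp only [Nat.add_sub_cancel]
  have ht : ((0:ℤ) - 1).toNat = 0 := rfl
  rw [ht, mul_zero, add_zero]
  push_cast
  rw [add_zero]
  have hsum : ∑ i ∈ Finset.Icc 1 k, ((Q i - 1).toNat : ℤ)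
      = ∑ i ∈ Finset.Icc 1 k, (Q i - 1) := by
    apply Finset.sum_congr rfl
    intro j hj
    rw [Int.toNat_of_nonneg (by have := hQpos j hj; omega)]
  rw [hsum, ← Finset.sum_add_distrib]
  have : ∀ j ∈ Finset.Icc 1 k, (pp P j - 1) * Q j + (Q j - 1) = pp P j * Q j - 1 := by
    intro j _; ring
  rw [Finset.sum_congr rfl this, Finset.sum_sub_distrib, Finset.sum_const, Nat.card_Icc]
  simp only [Nat.add_sub_cancel, smul_eq_mul, mul_one]
  push_cast
  ring

end ND


/-- For a Newton diagram datum with `gcd(pᵢ,qᵢ) = 1`, the number of lattice points in the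
topological interior of `Γ₋` equals
`Σ_{i=1}^{n} (pᵢ-1)(qᵢ-1)/2 + Σ_{i=1}^{n-1} pᵢQᵢ - (n-1)`. -/
theorem num_interior_lattice_points (n : ℕ) (hn : 1 ≤ n) (P Q : ℕ → ℤ)
    (hP0 : P 0 = 0) (hQn : Q n = 0)
    (hPmono : ∀ i < n, P i < P (i + 1))
    (hQmono : ∀ i < n, Q (i + 1) < Q i)
    (hconv : ∀ i, 1 ≤ i → i < n →
      ((Q (i - 1) - Q i : ℤ) : ℚ) / ((P i - P (i - 1) : ℤ) : ℚ) >
        ((Q i - Q (i + 1) : ℤ) : ℚ) / ((P (i + 1) - P i : ℤ) : ℚ))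
    (hgcd : ∀ i, 1 ≤ i → i ≤ n → Int.gcd (P i - P (i - 1)) (Q (i - 1) - Q i) = 1) :
    ({x : ℝ × ℝ | x ∈ interior (gammaMinus n P Q) ∧
        ∃ a b : ℤ, x = ((a : ℝ), (b : ℝ))}.ncard : ℤ) =
      (∑ i ∈ Finset.Icc 1 n,
        (P i - P (i - 1) - 1) * (Q (i - 1) - Q i - 1) / 2) +
      (∑ i ∈ Finset.Icc 1 (n - 1), (P i - P (i - 1)) * Q i) - ((n : ℤ) - 1) := by
  have h : ND.Datum n P Q := ⟨hn, hP0, hQn, hPmono, hQmono, hconv, hgcd⟩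
  have hg : interior (gammaMinus n P Q) = ND.U n P Q := by
    rw [gammaMinus]; exact ND.interior_eq h
  rw [hg, ND.E_eq h]
  have hinj : Function.Injective (fun ab : ℤ × ℤ => ((ab.1 : ℝ), (ab.2 : ℝ))) := by
    rintro ⟨a1, b1⟩ ⟨a2, b2⟩ hq
    simp only [Prod.mk.injEq] at hq ⊢
    exact ⟨by exact_mod_cast hq.1, by exact_mod_cast hq.2⟩
  rw [Set.ncard_image_of_injective _ hinj, Set.ncard_coe_finset, ND.T_card h, ND.final_alg h]
  simp only [ND.pp, ND.qq]
  ring
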